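/- Let ‖·‖ be a convex functional on ℝ^m (i.e., subadditive and positively homogeneous, so that ‖λu + (1−λ)v‖ ≤ λ‖u‖ + (1−λ)‖v‖ for λ ∈ [0,1]). Suppose f = f_1 + ... + f_n where each f_i : ℝ^m → ℝ^m satisfies ‖u + τ f_i(u)‖ ≤ ‖u‖ for all u and all 0 ≤ τ ≤ ε_i, with ε_i > 0. Then ‖u + τ f(u)‖ ≤ ‖u‖ for all u and all 0 ≤ τ ≤ ε, where ε = (∑_{i=1}^n 1/ε_i)^{-1}. -/

import Mathlib

/-- Harmonic-mean combination of forward Euler conditions: if each `f i` satisfies a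
forward Euler condition with threshold `ε i` for a convex functional `N`, then
`f = ∑ i, f i` satisfies the forward Euler condition with threshold `(∑ i, 1/ε i)⁻¹`. -/
theorem stmt_2 (m n : ℕ) (N : (Fin m → ℝ) → ℝ)
    (hsub : ∀ u v : Fin m → ℝ, N (u + v) ≤ N u + N v)
    (hhom : ∀ (c : ℝ) (u : Fin m → ℝ), 0 ≤ c → N (c • u) = c * N u)
    (f : Fin n → (Fin m → ℝ) → (Fin m → ℝ))
    (ε : Fin n → ℝ) (hε : ∀ i, 0 < ε i)
    (hFE : ∀ i (u : Fin m → ℝ) (τ : ℝ), 0 ≤ τ → τ ≤ ε i → N (u + τ • f i u) ≤ N u) :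
    ∀ (u : Fin m → ℝ) (τ : ℝ), 0 ≤ τ → τ ≤ (∑ i, (ε i)⁻¹)⁻¹ →
      N (u + τ • ∑ i, f i u) ≤ N u := by
  intro u τ hτ0 hτ
  set S : ℝ := ∑ i, (ε i)⁻¹ with hSdef
  have hN0 : N 0 = 0 := by
    have := hhom 0 0 le_rfl
    simpa using this
  have hsumN : ∀ (s : Finset (Fin n)) (g : Fin n → Fin m → ℝ),
      N (∑ i ∈ s, g i) ≤ ∑ i ∈ s, N (g i) := by
    intro s g
    induction s using Finset.induction with
    | empty => simp [hN0]
    | @insert a s h ih =>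
      rw [Finset.sum_insert h, Finset.sum_insert h]
      exact le_trans (hsub _ _) (add_le_add_right ih _)
  have hS0 : 0 ≤ S := Finset.sum_nonneg fun i _ => (inv_pos.mpr (hε i)).le
  have hτS : τ * S ≤ 1 := by
    rcases eq_or_lt_of_le hS0 with h | h
    · rw [← h]; norm_num
    · have : τ ≤ S⁻¹ := hτ
      calc τ * S ≤ S⁻¹ * S := mul_le_mul_of_nonneg_right this h.le
        _ = 1 := inv_mul_cancel₀ h.ne'
  have key : u + τ • ∑ i, f i u
      = (1 - τ * S) • u + ∑ i, (τ * (ε i)⁻¹) • (u + (ε i) • f i u) := by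
    funext x
    have : ∀ i : Fin n, (τ * (ε i)⁻¹) * (u x + ε i * f i u x)
        = τ * (ε i)⁻¹ * u x + τ * f i u x := by
      intro i
      have h1 : (ε i)⁻¹ * ε i = 1 := inv_mul_cancel₀ (hε i).ne'
      calc (τ * (ε i)⁻¹) * (u x + ε i * f i u x)
          = τ * (ε i)⁻¹ * u x + τ * ((ε i)⁻¹ * ε i) * f i u x := by ring
        _ = τ * (ε i)⁻¹ * u x + τ * f i u x := by rw [h1]; ring
    simp only [Pi.add_apply, Pi.smul_apply, Finset.sum_apply, smul_eq_mul,
      Finset.mul_sum, this, Finset.sum_add_distrib, hSdef, ← Finset.sum_mul]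
    ring
  rw [key]
  have hc : ∀ i : Fin n, (0:ℝ) ≤ τ * (ε i)⁻¹ :=
    fun i => mul_nonneg hτ0 (inv_pos.mpr (hε i)).le
  calc N ((1 - τ * S) • u + ∑ i, (τ * (ε i)⁻¹) • (u + (ε i) • f i u))
      ≤ N ((1 - τ * S) • u) + N (∑ i, (τ * (ε i)⁻¹) • (u + (ε i) • f i u)) := hsub _ _
    _ ≤ (1 - τ * S) * N u + ∑ i, N ((τ * (ε i)⁻¹) • (u + (ε i) • f i u)) := by
        rw [hhom _ _ (by linarith)]
        exact add_le_add_right (hsumN _ _) _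
    _ = (1 - τ * S) * N u + ∑ i, (τ * (ε i)⁻¹) * N (u + (ε i) • f i u) := by
        congr 1
        exact Finset.sum_congr rfl fun i _ => hhom _ _ (hc i)
    _ ≤ (1 - τ * S) * N u + ∑ i, (τ * (ε i)⁻¹) * N u := by
        refine add_le_add_right (Finset.sum_le_sum fun i _ => ?_) _
        exact mul_le_mul_of_nonneg_left (hFE i u (ε i) (hε i).le le_rfl) (hc i)
    _ = N u := by
        rw [← Finset.sum_mul, ← Finset.mul_sum, ← hSdef]
        ring
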